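/- arXiv:1005.1819 — 4 statements merged into one kernel-verified Lean document; each statement's English description precedes it below -/
import Mathlib

section
/- Let E be an infinite-dimensional Banach space over ℂ and L : E → E a compact linear operator. Then the approximate point spectrum Σ(L) = {λ ∈ ℂ : inf_{‖x‖=1} ‖λx − Lx‖ = 0} coincides with the spectrum σ(L) of L. -/
open Metric Topology Filter Function


-- Lemma A: compact + bounded-below operator forces finite dimension
lemma finDim_of_compact_bddBelow {E : Type*}
    [NormedAddCommGroup E] [NormedSpace ℂ E] [CompleteSpace E]
    (T : E →L[ℂ] E) (hT : IsCompactOperator T) {c : ℝ} (hc : 0 < c)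
    (hb : ∀ x, c * ‖x‖ ≤ ‖T x‖) : FiniteDimensional ℂ E := by
  have hanti : AntilipschitzWith (NNReal.mk c⁻¹ (by positivity)) T :=
    T.antilipschitz_of_bound fun x => by
      rw [NNReal.coe_mk, ← div_eq_inv_mul, le_div_iff₀ hc, mul_comm]
      exact hb x
  have hce : IsClosedEmbedding T := hanti.isClosedEmbedding T.uniformContinuous
  have hK : IsCompact (closure (T '' closedBall 0 1)) :=
    hT.isCompact_closure_image_closedBall (𝕜₁ := ℂ) (f := (T : E →ₗ[ℂ] E)) 1
  have himg : IsCompact (T '' closedBall 0 1) := by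
    refine hK.of_isClosed_subset (hce.isClosedMap _ Metric.isClosed_closedBall) subset_closure
  have hpre : IsCompact (T ⁻¹' (T '' closedBall 0 1)) := hce.isCompact_preimage himg
  rw [Set.preimage_image_eq _ hce.injective] at hpre
  exact FiniteDimensional.of_isCompact_closedBall₀ ℂ one_pos hpre


lemma riesz_unit {E : Type*} [NormedAddCommGroup E] [NormedSpace ℂ E]
    (G : Submodule ℂ E) (hG : IsClosed (G : Set E)) (w : E) (hw : w ∉ G) :
    ∃ x : E, ‖x‖ = 1 ∧ (∃ a : ℂ, ∃ y ∈ G, x = a • (w - y)) ∧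
      ∀ z ∈ G, (1:ℝ)/2 ≤ ‖x - z‖ := by
  have hGn : (G : Set E).Nonempty := ⟨0, G.zero_mem⟩
  set d := infDist w (G : Set E) with hd
  have hdpos : 0 < d := by
    rcases lt_or_eq_of_le (infDist_nonneg (x := w) (s := (G : Set E))) with h | h
    · exact h
    · exact absurd ((hG.mem_iff_infDist_zero hGn).2 h.symm) hw
  obtain ⟨y, hyG, hy⟩ : ∃ y ∈ (G : Set E), dist w y < 2 * d :=
    (infDist_lt_iff hGn).mp (by linarith)
  have hwy : w - y ≠ 0 := sub_ne_zero.2 fun h => hw (h ▸ hyG)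
  have hn : (0:ℝ) < ‖w - y‖ := norm_pos_iff.2 hwy
  have hn2 : ‖w - y‖ ≤ 2 * d := by rw [← dist_eq_norm]; exact hy.le
  refine ⟨((‖w - y‖ : ℂ))⁻¹ • (w - y), ?_, ⟨(‖w - y‖ : ℂ)⁻¹, y, hyG, rfl⟩, ?_⟩
  · rw [norm_smul, norm_inv, Complex.norm_real, Real.norm_eq_abs, abs_of_pos hn,
      inv_mul_cancel₀ hn.ne']
  · intro z hz
    set N := ‖w - y - (‖w - y‖ : ℂ) • z‖ with hN
    have key : d ≤ N := by
      have hmem : y + (‖w - y‖ : ℂ) • z ∈ (G : Set E) :=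
        G.add_mem hyG (G.smul_mem _ hz)
      calc d ≤ dist w (y + (‖w - y‖ : ℂ) • z) := infDist_le_dist_of_mem hmem
        _ = N := by rw [dist_eq_norm, hN]; congr 1; abel
    have heq : (‖w - y‖ : ℂ)⁻¹ • (w - y) - z
        = (‖w - y‖ : ℂ)⁻¹ • (w - y - (‖w - y‖ : ℂ) • z) := by
      have hr : (‖w - y‖ : ℂ) ≠ 0 := by exact_mod_cast hn.ne'
      match_scalars <;> field_simp
    have hnorm : ‖(‖w - y‖ : ℂ)⁻¹ • (w - y) - z‖ = N / ‖w - y‖ := by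
      rw [heq, norm_smul, norm_inv, Complex.norm_real, Real.norm_eq_abs, abs_of_pos hn,
        ← hN, div_eq_inv_mul]
    rw [hnorm]
    calc (1:ℝ)/2 = d / (2 * d) := by field_simp
      _ ≤ N / ‖w - y‖ := div_le_div₀ (le_trans hdpos.le key) key hn hn2


lemma fredholm_surj {E : Type*} [NormedAddCommGroup E] [NormedSpace ℂ E] [CompleteSpace E]
    (L : E →L[ℂ] E) (hL : IsCompactOperator L) {l : ℂ} (hl : l ≠ 0)
    {c : ℝ} (hc : 0 < c)
    (hb : ∀ x, c * ‖x‖ ≤ ‖(algebraMap ℂ (E →L[ℂ] E) l - L) x‖) :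
    Function.Surjective (algebraMap ℂ (E →L[ℂ] E) l - L) := by
  set T : E →L[ℂ] E := algebraMap ℂ (E →L[ℂ] E) l - L with hT
  by_contra hsurj
  rw [Function.Surjective] at hsurj
  push_neg at hsurj
  obtain ⟨w, hwnr⟩ := hsurj
  -- L v = l • v - T v
  have hLv : ∀ v : E, L v = l • v - T v := by
    intro v
    simp [hT, ContinuousLinearMap.sub_apply, Algebra.algebraMap_eq_smul_one,
      ContinuousLinearMap.smul_apply, ContinuousLinearMap.one_apply]
  -- antilipschitz
  have hanti : AntilipschitzWith (NNReal.mk c⁻¹ (by positivity)) T :=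
    T.antilipschitz_of_bound fun x => by
      rw [NNReal.coe_mk, ← div_eq_inv_mul, le_div_iff₀ hc, mul_comm]
      exact hb x
  have hantin : ∀ n : ℕ, AntilipschitzWith (NNReal.mk c⁻¹ (by positivity) ^ n) (⇑(T ^ n)) := by
    intro n
    induction n with
    | zero => simpa [pow_zero] using (AntilipschitzWith.id (α := E))
    | succ n ih =>
        have hco : ⇑(T ^ (n + 1)) = ⇑(T ^ n) ∘ ⇑T := by
          funext v; rw [pow_succ, ContinuousLinearMap.mul_apply, Function.comp_apply]
        rw [hco, pow_succ']
        exact ih.comp hanti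
  have hinjn : ∀ n : ℕ, Function.Injective (⇑(T ^ n)) := fun n => (hantin n).injective
  set R : ℕ → Submodule ℂ E := fun n => LinearMap.range ((T ^ n : E →L[ℂ] E) : E →ₗ[ℂ] E) with hR
  have hclosed : ∀ n, IsClosed ((R n : Submodule ℂ E) : Set E) := by
    intro n
    have := (hantin n).isClosed_range (T ^ n).uniformContinuous
    simp only [hR, LinearMap.coe_range, ContinuousLinearMap.coe_coe]; exact this
  have hmono : ∀ m n : ℕ, m ≤ n → R n ≤ R m := by
    intro m n h
    obtain ⟨k, rfl⟩ := Nat.exists_eq_add_of_le h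
    rintro x ⟨u, rfl⟩
    exact ⟨(T ^ k) u, by simp only [ContinuousLinearMap.coe_coe]; rw [← ContinuousLinearMap.mul_apply, ← pow_add]⟩
  have hgapmem : ∀ n, (T ^ n) w ∈ R n := fun n => ⟨w, rfl⟩
  have hgap : ∀ n, (T ^ n) w ∉ R (n + 1) := by
    rintro n ⟨z, hz⟩
    have : (T ^ n) (T z) = (T ^ n) w := by
      rw [← ContinuousLinearMap.mul_apply, ← pow_succ]; exact hz
    exact hwnr z (hinjn n this)
  -- Riesz sequence
  have hseq : ∀ n, ∃ x : E, ‖x‖ = 1 ∧ x ∈ R n ∧ ∀ z ∈ R (n + 1), (1:ℝ)/2 ≤ ‖x - z‖ := by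
    intro n
    obtain ⟨x, hx1, ⟨a, y, hyG, rfl⟩, hx3⟩ :=
      riesz_unit (R (n + 1)) (hclosed (n + 1)) ((T ^ n) w) (hgap n)
    refine ⟨_, hx1, ?_, hx3⟩
    exact (R n).smul_mem a ((R n).sub_mem (hgapmem n) (hmono n (n + 1) (Nat.le_succ n) hyG))
  choose x hx1 hx2 hx3 using hseq
  -- separation of images under L
  have hsep : ∀ m n : ℕ, m < n → ‖l‖ / 2 ≤ ‖L (x m) - L (x n)‖ := by
    intro m n hmn
    set v : E := T (x m) + l • (x n) - T (x n) with hv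
    have hvmem : v ∈ R (m + 1) := by
      have h1 : T (x m) ∈ R (m + 1) := by
        obtain ⟨u, hu⟩ := hx2 m
        exact ⟨u, by rw [← hu]; simp only [ContinuousLinearMap.coe_coe]; rw [← ContinuousLinearMap.mul_apply, ← pow_succ']⟩
      have h2 : l • (x n) ∈ R (m + 1) :=
        (R (m+1)).smul_mem l (hmono (m+1) n hmn (hx2 n))
      have h3 : T (x n) ∈ R (m + 1) := by
        apply hmono (m+1) (n+1) (by omega)
        obtain ⟨u, hu⟩ := hx2 n
        exact ⟨u, by rw [← hu]; simp only [ContinuousLinearMap.coe_coe]; rw [← ContinuousLinearMap.mul_apply, ← pow_succ']⟩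
      exact (R (m+1)).sub_mem ((R (m+1)).add_mem h1 h2) h3
    have heq : L (x m) - L (x n) = l • (x m - l⁻¹ • v) := by
      rw [hLv, hLv, smul_sub, smul_inv_smul₀ hl, hv]; abel
    have hge : (1:ℝ)/2 ≤ ‖x m - l⁻¹ • v‖ :=
      hx3 m (l⁻¹ • v) ((R (m+1)).smul_mem l⁻¹ hvmem)
    rw [heq, norm_smul]
    rw [div_le_iff₀ (by norm_num : (0:ℝ) < 2)] at *
    nlinarith [norm_pos_iff.2 hl, norm_nonneg (x m - l⁻¹ • v)]
  -- compactness contradiction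
  have hK : IsCompact (closure (L '' closedBall 0 1)) :=
    hL.isCompact_closure_image_closedBall (𝕜₁ := ℂ) (f := (L : E →ₗ[ℂ] E)) 1
  have hmem : ∀ n, L (x n) ∈ closure (L '' closedBall 0 1) := fun n =>
    subset_closure ⟨x n, by simp [mem_closedBall, dist_zero_right, hx1 n], rfl⟩
  obtain ⟨p, -, φ, hφ, hconv⟩ := hK.tendsto_subseq hmem
  have hcauchy : CauchySeq fun n => L (x (φ n)) := hconv.cauchySeq
  rw [Metric.cauchySeq_iff] at hcauchy
  obtain ⟨N, hN⟩ := hcauchy (‖l‖ / 2) (half_pos (norm_pos_iff.2 hl))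
  have h1 := hN N le_rfl (N + 1) (Nat.le_succ N)
  have h2 := hsep (φ N) (φ (N + 1)) (hφ (Nat.lt_succ_self N))
  rw [dist_eq_norm] at h1
  linarith

theorem compact_op_approx_spectrum_eq_spectrum {E : Type*}
    [NormedAddCommGroup E] [NormedSpace ℂ E] [CompleteSpace E]
    (hE : ¬ FiniteDimensional ℂ E)
    (L : E →L[ℂ] E) (hL : IsCompactOperator L) :
    {l : ℂ | sInf {r : ℝ | ∃ x : E, ‖x‖ = 1 ∧ r = ‖l • x - L x‖} = 0}
      = spectrum ℂ L := by
  have hnt : Nontrivial E := by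
    by_contra h
    rw [not_nontrivial_iff_subsingleton] at h
    exact hE (by infer_instance)
  obtain ⟨y₀, hy₀⟩ := exists_ne (0 : E)
  have hx₀ : ∃ x : E, ‖x‖ = 1 := by
    refine ⟨(‖y₀‖ : ℂ)⁻¹ • y₀, ?_⟩
    have hn : (0:ℝ) < ‖y₀‖ := norm_pos_iff.2 hy₀
    rw [norm_smul, norm_inv, Complex.norm_real, Real.norm_eq_abs, abs_of_pos hn,
      inv_mul_cancel₀ hn.ne']
  obtain ⟨x₀, hx₀⟩ := hx₀
  ext l
  simp only [Set.mem_setOf_eq]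
  set S : Set ℝ := {r : ℝ | ∃ x : E, ‖x‖ = 1 ∧ r = ‖l • x - L x‖} with hS
  have happ : ∀ x : E, (algebraMap ℂ (E →L[ℂ] E) l - L) x = l • x - L x := by
    intro x
    simp [Algebra.algebraMap_eq_smul_one, ContinuousLinearMap.sub_apply,
      ContinuousLinearMap.smul_apply, ContinuousLinearMap.one_apply]
  have hSne : S.Nonempty := ⟨‖l • x₀ - L x₀‖, x₀, hx₀, rfl⟩
  have hSbdd : BddBelow S := ⟨0, by rintro r ⟨x, hx, rfl⟩; exact norm_nonneg _⟩
  have hSnonneg : 0 ≤ sInf S := le_csInf hSne (by rintro r ⟨x, hx, rfl⟩; exact norm_nonneg _)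
  constructor
  · -- approx spectrum ⊆ spectrum
    intro h
    by_contra hspec
    rw [spectrum.notMem_iff] at hspec
    obtain ⟨u, hu⟩ := hspec
    have hTinv : ∀ x : E, (↑u⁻¹ : E →L[ℂ] E) ((algebraMap ℂ (E →L[ℂ] E) l - L) x) = x := by
      intro x
      rw [← hu, ← ContinuousLinearMap.mul_apply, u.inv_mul, ContinuousLinearMap.one_apply]
    have hb : ∀ r ∈ S, ‖(↑u⁻¹ : E →L[ℂ] E)‖⁻¹ ≤ r := by
      rintro r ⟨x, hx, rfl⟩
      have h1 : (1:ℝ) ≤ ‖(↑u⁻¹ : E →L[ℂ] E)‖ * ‖l • x - L x‖ := by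
        calc (1:ℝ) = ‖x‖ := hx.symm
          _ = ‖(↑u⁻¹ : E →L[ℂ] E) ((algebraMap ℂ (E →L[ℂ] E) l - L) x)‖ := by rw [hTinv]
          _ ≤ ‖(↑u⁻¹ : E →L[ℂ] E)‖ * ‖(algebraMap ℂ (E →L[ℂ] E) l - L) x‖ :=
              ContinuousLinearMap.le_opNorm _ _
          _ = ‖(↑u⁻¹ : E →L[ℂ] E)‖ * ‖l • x - L x‖ := by rw [happ]
      have hpos : 0 < ‖(↑u⁻¹ : E →L[ℂ] E)‖ := by
        by_contra hp
        push_neg at hp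
        nlinarith [norm_nonneg (l • x - L x)]
      rw [inv_le_iff_one_le_mul₀ hpos, mul_comm]
      exact h1
    have : ‖(↑u⁻¹ : E →L[ℂ] E)‖⁻¹ ≤ 0 := h ▸ le_csInf hSne hb
    have hne : (↑u⁻¹ : E →L[ℂ] E) ≠ 0 := by
      intro h0
      have := hTinv x₀
      rw [h0] at this
      simp only [ContinuousLinearMap.zero_apply] at this
      rw [← this, norm_zero] at hx₀
      norm_num at hx₀
    have hpos : 0 < ‖(↑u⁻¹ : E →L[ℂ] E)‖⁻¹ := inv_pos.2 (norm_pos_iff.2 hne)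
    linarith
  · -- spectrum ⊆ approx spectrum
    intro h
    refine le_antisymm ?_ hSnonneg
    by_contra hpos
    push_neg at hpos
    set c := sInf S with hc
    have hb : ∀ x : E, c * ‖x‖ ≤ ‖(algebraMap ℂ (E →L[ℂ] E) l - L) x‖ := by
      intro x
      rcases eq_or_ne x 0 with rfl | hx
      · simp
      · have hn : (0:ℝ) < ‖x‖ := norm_pos_iff.2 hx
        set xu : E := (‖x‖ : ℂ)⁻¹ • x with hxu
        have hxu1 : ‖xu‖ = 1 := by
          rw [hxu, norm_smul, norm_inv, Complex.norm_real, Real.norm_eq_abs, abs_of_pos hn,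
            inv_mul_cancel₀ hn.ne']
        have hcle : c ≤ ‖l • xu - L xu‖ := csInf_le hSbdd ⟨xu, hxu1, rfl⟩
        have heq : ‖l • xu - L xu‖ = ‖x‖⁻¹ * ‖(algebraMap ℂ (E →L[ℂ] E) l - L) x‖ := by
          rw [← happ, hxu, map_smul, norm_smul, norm_inv, Complex.norm_real,
            Real.norm_eq_abs, abs_of_pos hn]
        rw [heq] at hcle
        rw [← le_div_iff₀ hn, div_eq_inv_mul]
        exact hcle
    rcases eq_or_ne l 0 with rfl | hl
    · refine hE (finDim_of_compact_bddBelow L hL hpos fun x => ?_)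
      have := hb x
      rw [map_zero, zero_sub, ContinuousLinearMap.neg_apply, norm_neg] at this
      exact this
    · have hsurj := fredholm_surj L hL hl hpos hb
      have hinj : Function.Injective (algebraMap ℂ (E →L[ℂ] E) l - L) := by
        intro a b hab
        have := hb (a - b)
        rw [map_sub, hab, sub_self, norm_zero] at this
        have hab0 : ‖a - b‖ ≤ 0 := by nlinarith
        rw [← sub_eq_zero]
        exact norm_le_zero_iff.1 hab0
      have : IsUnit (algebraMap ℂ (E →L[ℂ] E) l - L) :=
        ContinuousLinearMap.isUnit_iff_bijective.2 ⟨hinj, hsurj⟩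
      exact (spectrum.mem_iff.1 h) this
end

section
/- For f : ℝ → ℝ defined by f(x) = √|x|·sin(1/x) for x ≠ 0 and f(0) = 0, one has Σ(f,0) = ℝ: for every λ ∈ ℝ, liminf_{h→0, h≠0} |λh − f(h)|/|h| = 0. -/
open Filter

lemma key_exists (l : ℝ) {δ : ℝ} (hδ : 0 < δ) :
    ∃ h : ℝ, 0 < h ∧ h < δ ∧ l * h - Real.sqrt |h| * Real.sin (1 / h) = 0 := by
  obtain ⟨n, hn⟩ := exists_nat_gt (max (l ^ 2) (1 / δ))
  set t0 : ℝ := 2 * Real.pi * n + 3 * Real.pi / 2 with ht0def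
  set t1 : ℝ := 2 * Real.pi * n + 5 * Real.pi / 2 with ht1def
  have hpi := Real.pi_gt_three
  have hnt0 : (n : ℝ) ≤ t0 := by
    rw [ht0def]; nlinarith [Nat.cast_nonneg (α := ℝ) n]
  have ht0pos : 0 < t0 := by rw [ht0def]; nlinarith [Nat.cast_nonneg (α := ℝ) n]
  have ht0l : l ^ 2 < t0 := lt_of_lt_of_le (lt_of_le_of_lt (le_max_left _ _) hn) hnt0
  have ht0δ : 1 / δ < t0 := lt_of_lt_of_le (lt_of_le_of_lt (le_max_right _ _) hn) hnt0
  have ht01 : t0 ≤ t1 := by rw [ht0def, ht1def]; nlinarith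
  -- g : t ↦ sin t - l * sqrt (1/t)
  set g : ℝ → ℝ := fun t => Real.sin t - l * Real.sqrt (1 / t) with hg
  have hcont : ContinuousOn g (Set.Icc t0 t1) := by
    apply Real.continuous_sin.continuousOn.sub
    apply ContinuousOn.mul continuousOn_const
    apply Real.continuous_sqrt.comp_continuousOn
    apply ContinuousOn.div continuousOn_const continuousOn_id
    intro x hx
    simpa using ne_of_gt (lt_of_lt_of_le ht0pos hx.1)
  have hsqrt_lt : ∀ t : ℝ, t0 ≤ t → |l| * Real.sqrt (1 / t) < 1 := by
    intro t ht
    have htpos : 0 < t := lt_of_lt_of_le ht0pos ht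
    have hlt : l ^ 2 < t := lt_of_lt_of_le ht0l ht
    have h1 : Real.sqrt (1 / t) = 1 / Real.sqrt t := by
      rw [one_div, one_div, Real.sqrt_inv]
    rw [h1]
    have hst : |l| < Real.sqrt t := by
      have : Real.sqrt (l ^ 2) < Real.sqrt t := by
        apply Real.sqrt_lt_sqrt (sq_nonneg l) hlt
      rwa [Real.sqrt_sq_eq_abs] at this
    have hstpos : 0 < Real.sqrt t := lt_of_le_of_lt (abs_nonneg l) hst
    rw [mul_one_div, div_lt_one hstpos]
    exact hst
  have hsin0 : Real.sin t0 = -1 := by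
    rw [ht0def]
    have : 2 * Real.pi * n + 3 * Real.pi / 2 = 3 * Real.pi / 2 + n * (2 * Real.pi) := by ring
    rw [this, Real.sin_periodic.nat_mul n (3 * Real.pi / 2)]
    have : (3 : ℝ) * Real.pi / 2 = Real.pi + Real.pi / 2 := by ring
    rw [this, Real.sin_add, Real.sin_pi, Real.cos_pi, Real.sin_pi_div_two]; ring
  have hsin1 : Real.sin t1 = 1 := by
    rw [ht1def]
    have : 2 * Real.pi * n + 5 * Real.pi / 2 = Real.pi / 2 + (n + 1) * (2 * Real.pi) := by ring
    rw [this]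
    have := Real.sin_periodic.nat_mul (n + 1) (Real.pi / 2)
    push_cast at this
    rw [this, Real.sin_pi_div_two]
  have hg0 : g t0 ≤ 0 := by
    rw [hg]; simp only [hsin0]
    have := hsqrt_lt t0 le_rfl
    have := neg_abs_le (l * Real.sqrt (1 / t0))
    rw [abs_mul, abs_of_nonneg (Real.sqrt_nonneg _)] at this
    linarith
  have hg1 : 0 ≤ g t1 := by
    rw [hg]; simp only [hsin1]
    have := hsqrt_lt t1 ht01
    have := le_abs_self (l * Real.sqrt (1 / t1))
    rw [abs_mul, abs_of_nonneg (Real.sqrt_nonneg _)] at this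
    linarith
  have := intermediate_value_Icc ht01 hcont
  have h0mem : (0 : ℝ) ∈ Set.Icc (g t0) (g t1) := ⟨hg0, hg1⟩
  obtain ⟨t, htmem, htg⟩ := this h0mem
  have htpos : 0 < t := lt_of_lt_of_le ht0pos htmem.1
  have hsin : Real.sin t = l * Real.sqrt (1 / t) := by
    have : Real.sin t - l * Real.sqrt (1 / t) = 0 := htg
    linarith
  refine ⟨1 / t, by positivity, ?_, ?_⟩
  · rw [div_lt_iff₀ htpos]
    have h1δ : 1 / δ < t := lt_of_lt_of_le ht0δ htmem.1
    rw [div_lt_iff₀ hδ] at h1δ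
    linarith
  · have h1t : 1 / (1 / t) = t := one_div_one_div t
    rw [h1t, abs_of_pos (by positivity : (0:ℝ) < 1 / t), hsin]
    have : Real.sqrt (1 / t) * (l * Real.sqrt (1 / t)) = l * (1 / t) := by
      rw [← mul_assoc, mul_comm (Real.sqrt (1/t)) l, mul_assoc,
        Real.mul_self_sqrt (by positivity)]
    rw [this]; ring

theorem Sigma_univ_sqrt_sin (l : ℝ) :
    Filter.liminf
        (fun h : ℝ => |l * h - Real.sqrt |h| * Real.sin (1 / h)| / |h|)
        (nhdsWithin 0 {0}ᶜ) = 0 := by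
  set u : ℝ → ℝ := fun h : ℝ => |l * h - Real.sqrt |h| * Real.sin (1 / h)| / |h| with hu
  have hnonneg : ∀ x, 0 ≤ u x := fun x => by positivity
  have hfreq : ∃ᶠ x in nhdsWithin 0 {0}ᶜ, u x ≤ 0 := by
    rw [Filter.frequently_iff]
    intro U hU
    rw [Metric.mem_nhdsWithin_iff] at hU
    obtain ⟨ε, hε, hsub⟩ := hU
    obtain ⟨h, hpos, hlt, hzero⟩ := key_exists l hε
    refine ⟨h, hsub ⟨?_, ?_⟩, ?_⟩
    · rw [Metric.mem_ball, Real.dist_eq, sub_zero, abs_of_pos hpos]; exact hlt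
    · exact ne_of_gt hpos
    · rw [hu]; simp only [hzero, abs_zero, zero_div, le_refl]
  apply le_antisymm
  · exact Filter.liminf_le_of_frequently_le hfreq
      ⟨0, Filter.eventually_map.2 (Filter.Eventually.of_forall hnonneg)⟩
  · exact Filter.le_liminf_of_le (Filter.IsCoboundedUnder.of_frequently_le hfreq)
      (Filter.Eventually.of_forall hnonneg)
end

section
/- Let f : ℂ → ℂ be defined by f(x + iy) = |x| + iy. Then λ = a + ib satisfies inf_{|z|=1} |λz − f(z)| = 0 if and only if a² + b² = 1. That is, Σ(f,0) = S¹. -/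
open Complex

lemma fnorm_eq (z : ℂ) :
    ‖(((|z.re| : ℝ) : ℂ) + (z.im : ℂ) * Complex.I)‖ = ‖z‖ := by
  rw [Complex.norm_def, Complex.norm_def]
  congr 1
  simp [Complex.normSq_apply, abs_mul_abs_self]

lemma exists_eig (l : ℂ) (hl : ‖l‖ = 1) :
    ∃ z : ℂ, ‖z‖ = 1 ∧
      l * z = (((|z.re| : ℝ) : ℂ) + (z.im : ℂ) * Complex.I) := by
  obtain ⟨z₀, hz₀⟩ := IsAlgClosed.exists_pow_nat_eq (-(starRingEnd ℂ) l) (n := 2) (by norm_num)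
  have hmain : ∀ z : ℂ, z ^ 2 = -(starRingEnd ℂ) l → z.re ≤ 0 →
      ‖z‖ = 1 ∧ l * z = (((|z.re| : ℝ) : ℂ) + (z.im : ℂ) * Complex.I) := by
    intro z hz2 hre
    have hnz : ‖z‖ = 1 := by
      have h1 : ‖z‖ ^ 2 = 1 := by
        rw [← norm_pow, hz2, norm_neg, RingHomIsometric.norm_map, hl]
      nlinarith [norm_nonneg z]
    refine ⟨hnz, ?_⟩
    have hz0 : z ≠ 0 := by
      intro h; rw [h, norm_zero] at hnz; norm_num at hnz
    have hzc : z * (starRingEnd ℂ) z = 1 := by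
      rw [Complex.mul_conj]
      norm_cast
      rw [Complex.normSq_eq_norm_sq, hnz]; norm_num
    have hlc : l * (starRingEnd ℂ) l = 1 := by
      rw [Complex.mul_conj]
      norm_cast
      rw [Complex.normSq_eq_norm_sq, hl]; norm_num
    have key : (l * z + (starRingEnd ℂ) z) * z = 0 := by
      have : (l * z + (starRingEnd ℂ) z) * z = l * z ^ 2 + z * (starRingEnd ℂ) z := by ring
      rw [this, hz2, hzc]
      rw [mul_neg, hlc]
      ring
    have heq : l * z = -(starRingEnd ℂ) z := by
      rcases mul_eq_zero.mp key with h | h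
      · linear_combination h
      · exact absurd h hz0
    rw [heq, abs_of_nonpos hre]
    apply Complex.ext <;> simp
  rcases le_total z₀.re 0 with h | h
  · exact ⟨z₀, hmain z₀ hz₀ h⟩
  · refine ⟨-z₀, hmain (-z₀) ?_ (by simpa using h)⟩
    rw [neg_pow]; simpa using hz₀

theorem Sigma_abs_re_eq_sphere :
    {l : ℂ | sInf {r : ℝ | ∃ z : ℂ, ‖z‖ = 1 ∧
        r = ‖l * z - (((|z.re| : ℝ) : ℂ) + (z.im : ℂ) * Complex.I)‖} = 0}
      = Metric.sphere (0 : ℂ) 1 := by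
  ext l
  simp only [Set.mem_setOf_eq, Metric.mem_sphere, dist_zero_right]
  set S : Set ℝ := {r : ℝ | ∃ z : ℂ, ‖z‖ = 1 ∧
      r = ‖l * z - (((|z.re| : ℝ) : ℂ) + (z.im : ℂ) * Complex.I)‖} with hS
  have hne : S.Nonempty :=
    ⟨‖l * 1 - ((((|(1:ℂ).re| : ℝ)) : ℂ) + ((1:ℂ).im : ℂ) * Complex.I)‖, 1, norm_one, rfl⟩
  constructor
  · intro h
    have key : |‖l‖ - 1| ≤ sInf S := by
      apply le_csInf hne
      rintro r ⟨z, hz, rfl⟩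
      calc |‖l‖ - 1| = |‖l * z‖ - ‖(((|z.re| : ℝ) : ℂ) + (z.im : ℂ) * Complex.I)‖| := by
            rw [norm_mul, hz, mul_one, fnorm_eq z, hz]
        _ ≤ ‖l * z - (((|z.re| : ℝ) : ℂ) + (z.im : ℂ) * Complex.I)‖ :=
            abs_norm_sub_norm_le _ _
    rw [h] at key
    have : |‖l‖ - 1| = 0 := le_antisymm key (abs_nonneg _)
    have := abs_eq_zero.mp this
    linarith [this]
  · intro hl
    obtain ⟨z, hz, heig⟩ := exists_eig l hl
    have h0 : (0 : ℝ) ∈ S := ⟨z, hz, by rw [heig, sub_self, norm_zero]⟩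
    refine le_antisymm ?_ ?_
    · exact csInf_le ⟨0, by rintro r ⟨w, hw, rfl⟩; exact norm_nonneg _⟩ h0
    · apply le_csInf hne
      rintro r ⟨w, hw, rfl⟩
      exact norm_nonneg _
end

section
/- Let f : E → E be continuous on a Banach space E and suppose g = f + h where h : E → E is continuous with limsup_{x→p, x≠p} ‖h(x) − h(p)‖/‖x − p‖ = 0. Then for every λ ∈ 𝕂, d_p(λ − f) = d_p(λ − g), where d_p(F) = liminf_{x→0, x≠0} ‖F(p+x) − F(p)‖/‖x‖; in particular Σ(f,p) = Σ(g,p). -/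
open Filter

/-- The lower local quasinorm `d_p(F)` (valued in `ℝ≥0∞`). -/
noncomputable def dpE {E : Type*} [NormedAddCommGroup E] (F : E → E) (p : E) : ENNReal :=
  Filter.liminf (fun x : E => ENNReal.ofReal (‖F x - F p‖ / ‖x - p‖)) (nhdsWithin p {p}ᶜ)

lemma liminf_le_of_le_add_small {α : Type*} {l : Filter α} {u v c : α → ENNReal}
    (hle : ∀ᶠ x in l, u x ≤ v x + c x) (hc : Filter.limsup c l = 0) :
    Filter.liminf u l ≤ Filter.liminf v l := by
  rcases l.eq_or_neBot with rfl | hne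
  · simp [Filter.liminf_eq]
  · refine ENNReal.le_of_forall_pos_le_add fun ε hε _ => ?_
    have hcev : ∀ᶠ x in l, c x < (ε : ENNReal) := by
      apply Filter.eventually_lt_of_limsup_lt _ Filter.isBounded_le_of_top
      rw [hc]
      exact_mod_cast hε
    have hev : ∀ᶠ x in l, u x ≤ v x + (ε : ENNReal) := by
      filter_upwards [hle, hcev] with x h1 h2
      exact h1.trans (add_le_add_right h2.le _)
    calc Filter.liminf u l ≤ Filter.liminf (fun x => v x + (ε : ENNReal)) l :=
          Filter.liminf_le_liminf hev
      _ = Filter.liminf v l + (ε : ENNReal) :=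
          liminf_add_const l v _ (by isBoundedDefault) (by isBoundedDefault)

theorem dp_eq_of_quasinorm_zero {𝕜 E : Type*} [RCLike 𝕜]
    [NormedAddCommGroup E] [NormedSpace 𝕜 E] [CompleteSpace E]
    (f h g : E → E) (hf : Continuous f) (hh : Continuous h) (p : E)
    (hg : g = fun x => f x + h x)
    (hquasi : Filter.limsup (fun x : E => ENNReal.ofReal (‖h x - h p‖ / ‖x - p‖))
      (nhdsWithin p {p}ᶜ) = 0) :
    (∀ l : 𝕜, dpE (fun x => l • x - f x) p = dpE (fun x => l • x - g x) p) ∧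
    ({l : 𝕜 | dpE (fun x => l • x - f x) p = 0}
      = {l : 𝕜 | dpE (fun x => l • x - g x) p = 0}) := by
  have key : ∀ l : 𝕜, dpE (fun x => l • x - f x) p = dpE (fun x => l • x - g x) p := by
    intro l
    subst hg
    set L := nhdsWithin p ({p}ᶜ : Set E)
    have hxp : ∀ᶠ x in L, x ≠ p := by
      filter_upwards [self_mem_nhdsWithin] with x hx
      exact hx
    have hrel : ∀ x : E, x ≠ p →
        (l • x - f x - (l • p - f p)) = (l • x - (f x + h x) - (l • p - (f p + h p))) + (h x - h p) := by
      intro x _; abel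
    unfold dpE
    apply le_antisymm
    · refine liminf_le_of_le_add_small ?_ hquasi
      filter_upwards [hxp] with x hx
      rw [← ENNReal.ofReal_add (by positivity) (by positivity), ← add_div]
      apply ENNReal.ofReal_le_ofReal
      have hpos : (0:ℝ) < ‖x - p‖ := by
        rw [norm_pos_iff, sub_ne_zero]; exact hx
      gcongr
      rw [hrel x hx]
      exact norm_add_le _ _
    · refine liminf_le_of_le_add_small ?_ hquasi
      filter_upwards [hxp] with x hx
      rw [← ENNReal.ofReal_add (by positivity) (by positivity), ← add_div]
      apply ENNReal.ofReal_le_ofReal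
      have hpos : (0:ℝ) < ‖x - p‖ := by
        rw [norm_pos_iff, sub_ne_zero]; exact hx
      gcongr
      have : (l • x - (f x + h x) - (l • p - (f p + h p)))
          = (l • x - f x - (l • p - f p)) - (h x - h p) := by abel
      rw [this]
      exact norm_sub_le _ _
  refine ⟨key, ?_⟩
  ext l
  simp [key l]
end
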